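/- arXiv:1201.0290 — 3 statements merged into one kernel-verified Lean document; each statement's English description precedes it below -/
import Mathlib

section
/- Let K be a field, V a K-vector space, B : V → V → K a bilinear form that is nondegenerate in the sense that B(x, y) = 0 for all y implies x = 0, and Q : V → V a linear endomorphism with Q ∘ Q = 0 and B(Q x, y) = B(x, Q y) for all x, y. Then the kernel of Q is a coisotropic subspace: every x ∈ V satisfying B(x, w) = 0 for all w ∈ ker Q lies in ker Q, i.e. (ker Q)^⊥ ⊆ ker Q. -/
/-- The kernel of a square-zero, self-adjoint endomorphism is coisotropic:
`(ker Q)^⊥ ⊆ ker Q`. -/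
theorem ker_coisotropic
    {K V : Type*} [Field K] [AddCommGroup V] [Module K V]
    (B : V →ₗ[K] V →ₗ[K] K) (Q : V →ₗ[K] V)
    (hnd : ∀ x : V, (∀ y : V, B x y = 0) → x = 0)
    (hQ2 : Q ∘ₗ Q = 0)
    (hsa : ∀ x y : V, B (Q x) y = B x (Q y)) :
    ∀ x : V, (∀ w : V, Q w = 0 → B x w = 0) → Q x = 0 := by
  intro x hx
  apply hnd
  intro y
  rw [hsa]
  exact hx _ (LinearMap.congr_fun hQ2 y)
end

section
/- Let K be a field, V and W K-vector spaces, π : V → W a surjective linear map, and Q : V → V, q : W → W linear endomorphisms with π ∘ Q = q ∘ π and Q ∘ Q = 0. Let A = {ξ ∈ ker Q | π(ξ) ∈ range q}, a subspace of V containing range Q. Then there is a K-linear isomorphism A ⧸ (range Q) ≅ (ker Q ∩ ker π) ⧸ (range Q ∩ ker π), induced by sending ξ ∈ A to ξ − Q(η), where η ∈ V is any element with π(η) = w for some w with π(ξ) = q(w). -/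
/-- The two descriptions of the tangent space to the reduced fiber agree:
`{ξ ∈ ker Q | π ξ ∈ Im q} ⧸ Im Q ≅ (ker Q ∩ ker π) ⧸ (Im Q ∩ ker π)`,
the isomorphism being induced by `ξ ↦ ξ - Q η` where `π η = w` and `π ξ = q w`. -/
theorem reduced_fiber_isomorphism
    {K V W : Type*} [Field K] [AddCommGroup V] [Module K V]
    [AddCommGroup W] [Module K W]
    (π : V →ₗ[K] W) (hsurj : Function.Surjective π)
    (Q : V →ₗ[K] V) (q : W →ₗ[K] W)
    (hcomm : π ∘ₗ Q = q ∘ₗ π)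
    (hQ2 : Q ∘ₗ Q = 0) :
    ∃ e : (↥(LinearMap.ker Q ⊓ Submodule.comap π (LinearMap.range q)) ⧸
            (LinearMap.range Q).comap
              (LinearMap.ker Q ⊓ Submodule.comap π (LinearMap.range q)).subtype) ≃ₗ[K]
          (↥(LinearMap.ker Q ⊓ LinearMap.ker π) ⧸
            (LinearMap.range Q ⊓ LinearMap.ker π).comap
              (LinearMap.ker Q ⊓ LinearMap.ker π).subtype),
      ∀ (ξ : V) (hξ : ξ ∈ LinearMap.ker Q ⊓ Submodule.comap π (LinearMap.range q))
        (w : W) (η : V), π ξ = q w → π η = w →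
        ∃ h : ξ - Q η ∈ LinearMap.ker Q ⊓ LinearMap.ker π,
          e (Submodule.Quotient.mk ⟨ξ, hξ⟩) = Submodule.Quotient.mk ⟨ξ - Q η, h⟩ := by
  classical
  have hπQ : ∀ v, π (Q v) = q (π v) := fun v => LinearMap.congr_fun hcomm v
  have hQQ : ∀ v, Q (Q v) = 0 := fun v => LinearMap.congr_fun hQ2 v
  set A : Submodule K V := LinearMap.ker Q ⊓ Submodule.comap π (LinearMap.range q) with hA
  set B : Submodule K V := LinearMap.ker Q ⊓ LinearMap.ker π with hB
  set N : Submodule K B := (LinearMap.range Q ⊓ LinearMap.ker π).comap B.subtype with hN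
  set N' : Submodule K A := (LinearMap.range Q).comap A.subtype with hN'
  -- membership of ξ - Q η in B
  have memB : ∀ (ξ η : V) (w : W), Q ξ = 0 → π ξ = q w → π η = w →
      ξ - Q η ∈ B := by
    intro ξ η w h1 h2 h3
    refine Submodule.mem_inf.mpr ⟨?_, ?_⟩
    · simp [LinearMap.mem_ker, map_sub, h1, hQQ]
    · simp [LinearMap.mem_ker, map_sub, hπQ, h3, h2]
  have hkerx : ∀ x : A, Q x.1 = 0 := fun x => (Submodule.mem_inf.mp x.2).1
  have hch : ∀ x : A, ∃ p : W × V, π x.1 = q p.1 ∧ π p.2 = p.1 := by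
    intro x
    obtain ⟨-, hcom⟩ := Submodule.mem_inf.mp x.2
    obtain ⟨w, hw⟩ := LinearMap.mem_range.mp (Submodule.mem_comap.mp hcom)
    obtain ⟨η, hη⟩ := hsurj w
    exact ⟨(w, η), hw.symm, hη⟩
  let wch : A → W := fun x => (hch x).choose.1
  let ηch : A → V := fun x => (hch x).choose.2
  have hwη : ∀ x : A, π x.1 = q (wch x) ∧ π (ηch x) = wch x := fun x => (hch x).choose_spec
  let g0 : A → B ⧸ N := fun x => Submodule.Quotient.mk
    ⟨x.1 - Q (ηch x), memB x.1 (ηch x) (wch x) (hkerx x) (hwη x).1 (hwη x).2⟩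
  -- independence of choices
  have key : ∀ (x : A) (w : W) (η : V), π x.1 = q w → π η = w →
      ∀ h : x.1 - Q η ∈ B, g0 x = Submodule.Quotient.mk ⟨x.1 - Q η, h⟩ := by
    intro x w η hw hη h
    refine (Submodule.Quotient.eq N).mpr ?_
    refine Submodule.mem_comap.mpr (Submodule.mem_inf.mpr ⟨?_, ?_⟩)
    · refine LinearMap.mem_range.mpr ⟨η - ηch x, ?_⟩
      show Q (η - ηch x) = (x.1 - Q (ηch x)) - (x.1 - Q η)
      rw [map_sub]; abel
    · rw [LinearMap.mem_ker]
      show π ((x.1 - Q (ηch x)) - (x.1 - Q η)) = 0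
      have e1 : (x.1 - Q (ηch x)) - (x.1 - Q η) = Q η - Q (ηch x) := by abel
      rw [e1, map_sub, hπQ, hπQ, hη, (hwη x).2, ← hw, ← (hwη x).1, sub_self]
  have g0_add : ∀ x y : A, g0 (x + y) = g0 x + g0 y := by
    intro x y
    have h1 : π (x + y : A).1 = q (wch x + wch y) := by
      simp [map_add, (hwη x).1, (hwη y).1]
    have h2 : π (ηch x + ηch y) = wch x + wch y := by
      simp [map_add, (hwη x).2, (hwη y).2]
    have hm := memB (x + y : A).1 (ηch x + ηch y) (wch x + wch y)
      (hkerx (x + y)) h1 h2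
    rw [key (x + y) _ _ h1 h2 hm]
    show _ = Submodule.Quotient.mk _ + Submodule.Quotient.mk _
    rw [← Submodule.Quotient.mk_add]
    congr 1
    ext
    simp [map_add]
    abel
  have g0_smul : ∀ (c : K) (x : A), g0 (c • x) = c • g0 x := by
    intro c x
    have h1 : π (c • x : A).1 = q (c • wch x) := by
      simp [map_smul, (hwη x).1]
    have h2 : π (c • ηch x) = c • wch x := by
      simp [map_smul, (hwη x).2]
    have hm := memB (c • x : A).1 (c • ηch x) (c • wch x) (hkerx (c • x)) h1 h2
    rw [key (c • x) _ _ h1 h2 hm]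
    show _ = c • Submodule.Quotient.mk _
    rw [← Submodule.Quotient.mk_smul]
    congr 1
    ext
    simp [map_smul, smul_sub]
  let g : A →ₗ[K] B ⧸ N := ⟨⟨g0, g0_add⟩, g0_smul⟩
  -- kernel of g is N'
  have hker : N' = LinearMap.ker g := by
    ext x
    constructor
    · intro hx
      obtain ⟨ζ, hζ⟩ := LinearMap.mem_range.mp (Submodule.mem_comap.mp hx)
      have h1 : π x.1 = q (π ζ) := by
        rw [show (x : V) = Q ζ from hζ.symm, hπQ]
      have h2 : π ζ = π ζ := rfl
      have hm := memB x.1 ζ (π ζ) (hkerx x) h1 h2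
      rw [LinearMap.mem_ker]
      show g0 x = 0
      rw [key x _ _ h1 h2 hm]
      have : (⟨x.1 - Q ζ, hm⟩ : B) = 0 := by
        ext; simp [hζ]
      rw [this, Submodule.Quotient.mk_zero]
    · intro hx
      have hx' : g0 x = 0 := hx
      have := (Submodule.Quotient.mk_eq_zero N).mp hx'
      obtain ⟨hr, -⟩ := Submodule.mem_inf.mp (Submodule.mem_comap.mp this)
      obtain ⟨ζ, hζ⟩ := LinearMap.mem_range.mp hr
      refine Submodule.mem_comap.mpr (LinearMap.mem_range.mpr ⟨ζ + ηch x, ?_⟩)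
      show Q (ζ + ηch x) = (x : V)
      have hζ' : Q ζ = x.1 - Q (ηch x) := hζ
      rw [map_add, hζ']
      abel
  -- surjectivity of g
  have hsurjg : Function.Surjective g := by
    intro z
    obtain ⟨b, rfl⟩ := Submodule.Quotient.mk_surjective N z
    obtain ⟨hbk, hbp⟩ := Submodule.mem_inf.mp b.2
    have hmemA : b.1 ∈ A := by
      refine Submodule.mem_inf.mpr ⟨hbk, Submodule.mem_comap.mpr ?_⟩
      rw [LinearMap.mem_ker.mp hbp]
      exact LinearMap.mem_range.mpr ⟨0, by simp⟩
    refine ⟨⟨b.1, hmemA⟩, ?_⟩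
    have h1 : π (⟨b.1, hmemA⟩ : A).1 = q 0 := by simp [LinearMap.mem_ker.mp hbp]
    have h2 : π (0 : V) = 0 := by simp
    have hm := memB b.1 0 0 (LinearMap.mem_ker.mp hbk) h1 h2
    show g0 _ = _
    rw [key ⟨b.1, hmemA⟩ 0 0 h1 h2 hm]
    congr 1
    ext
    simp
  -- assemble the equivalence
  have hle : N' ≤ LinearMap.ker g := hker.le
  let gbar : (A ⧸ N') →ₗ[K] B ⧸ N := N'.liftQ g hle
  have hinj : Function.Injective gbar := by
    rw [← LinearMap.ker_eq_bot]
    exact Submodule.ker_liftQ_eq_bot N' g hle hker.ge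
  have hsur : Function.Surjective gbar := by
    intro z
    obtain ⟨a, ha⟩ := hsurjg z
    exact ⟨Submodule.Quotient.mk a, by rw [Submodule.liftQ_apply]; exact ha⟩
  refine ⟨LinearEquiv.ofBijective gbar ⟨hinj, hsur⟩, ?_⟩
  intro ξ hξ w η hw hη
  have hQξ : Q ξ = 0 := (Submodule.mem_inf.mp hξ).1
  have hm := memB ξ η w hQξ hw hη
  refine ⟨hm, ?_⟩
  show gbar (Submodule.Quotient.mk ⟨ξ, hξ⟩) = _
  rw [Submodule.liftQ_apply]
  exact key ⟨ξ, hξ⟩ w η hw hη hm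
end

section
/- Let K be a field and H, A, M K-vector spaces. Let b : H → H → K be a bilinear form, P : A → M → K a bilinear pairing that is nondegenerate in its first argument (P(a, m) = 0 for all m ∈ M implies a = 0), and β : H → A, ψ : M → H linear maps such that P(β(h), m) = b(h, ψ(m)) for all h ∈ H and m ∈ M, and such that ker β = range ψ. Then the b-orthogonal of the range of ψ equals the range of ψ: {h ∈ H | b(h, ψ(m)) = 0 for all m ∈ M} = range ψ; in particular range ψ is a Lagrangian subspace of (H, b). -/
/-- The `b`-orthogonal of the range of `ψ` equals the range of `ψ`; in
particular `range ψ` is a Lagrangian subspace of `(H, b)`. -/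
theorem range_psi_lagrangian
    {K H A M : Type*} [Field K] [AddCommGroup H] [Module K H]
    [AddCommGroup A] [Module K A] [AddCommGroup M] [Module K M]
    (b : H →ₗ[K] H →ₗ[K] K) (P : A →ₗ[K] M →ₗ[K] K)
    (hP : ∀ a : A, (∀ m : M, P a m = 0) → a = 0)
    (β : H →ₗ[K] A) (ψ : M →ₗ[K] H)
    (hadj : ∀ (h : H) (m : M), P (β h) m = b h (ψ m))
    (hexact : LinearMap.ker β = LinearMap.range ψ) :
    {h : H | ∀ m : M, b h (ψ m) = 0} = Set.range ψ := by
  ext h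
  constructor
  · intro hh
    have : β h = 0 := hP _ (fun m => by rw [hadj]; exact hh m)
    have : h ∈ LinearMap.range ψ := hexact ▸ LinearMap.mem_ker.mpr this
    exact this
  · rintro ⟨m, rfl⟩ m'
    have hb : β (ψ m) = 0 := LinearMap.mem_ker.mp
      (hexact ▸ LinearMap.mem_range_self ψ m)
    rw [← hadj, hb, map_zero, LinearMap.zero_apply]
end
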